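/- Assuming subspace independence, if a data matrix X has rows drawn from k independent linear subspaces (so X is block-structured under a suitable permutation), then there exists a block-diagonal matrix Q with zero diagonal satisfying X = QX, provided each subspace contains at least dim+1 sample rows in general position. -/

import Mathlib

open Matrix

/-- Subspace self-expressiveness: if the rows of `X` are partitioned into groups, the rows
of group `i` spanning a subspace `Uᵢ`, each group has more rows than `dim Uᵢ`, and the rows
are in general position (every `dim Uᵢ` of the rows of a group, other than any fixed row,
span `Uᵢ`), then there is a block-diagonal matrix `Q` with zero diagonal and `X = QX`. -/
theorem stmt_12 {n d k : ℕ} (X : Matrix (Fin n) (Fin d) ℝ) (g : Fin n → Fin k)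
    (U : Fin k → Submodule ℝ (Fin d → ℝ))
    (hU : ∀ i, U i = Submodule.span ℝ ((fun j => X j) '' {j | g j = i}))
    (hcard : ∀ i, Module.finrank ℝ (U i) < (Finset.univ.filter fun j => g j = i).card)
    (hgen : ∀ j : Fin n, ∀ s : Finset (Fin n),
      (∀ l ∈ s, g l = g j ∧ l ≠ j) → s.card = Module.finrank ℝ (U (g j)) →
        Submodule.span ℝ ((fun l => X l) '' (s : Set (Fin n))) = U (g j)) :
    ∃ Q : Matrix (Fin n) (Fin n) ℝ,
      (∀ j, Q j j = 0) ∧ (∀ j l, g j ≠ g l → Q j l = 0) ∧ X = Q * X := by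
  have key : ∀ j : Fin n, ∃ c : Fin n → ℝ,
      (∀ l, c l ≠ 0 → g l = g j ∧ l ≠ j) ∧ X j = ∑ l, c l • X l := by
    intro j
    set T : Finset (Fin n) :=
      (Finset.univ.filter fun l => g l = g j).erase j with hT
    have hjmem : j ∈ Finset.univ.filter fun l => g l = g j := by simp
    have hTcard : Module.finrank ℝ (U (g j)) ≤ T.card := by
      have := hcard (g j)
      rw [hT, Finset.card_erase_of_mem hjmem]
      omega
    obtain ⟨s, hsT, hscard⟩ := Finset.exists_subset_card_eq hTcard
    have hsprop : ∀ l ∈ s, g l = g j ∧ l ≠ j := by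
      intro l hl
      have := hsT hl
      rw [hT, Finset.mem_erase, Finset.mem_filter] at this
      exact ⟨this.2.2, this.1⟩
    have hspan := hgen j s hsprop hscard
    have hmem : X j ∈ Submodule.span ℝ ((fun l => X l) '' (s : Set (Fin n))) := by
      rw [hspan, hU]
      exact Submodule.subset_span ⟨j, rfl, rfl⟩
    rw [Finsupp.mem_span_image_iff_linearCombination] at hmem
    obtain ⟨c, hcsupp, hcsum⟩ := hmem
    refine ⟨fun l => c l, ?_, ?_⟩
    · intro l hl
      have hls : l ∈ s := by
        have := hcsupp (Finsupp.mem_support_iff.mpr hl)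
        exact_mod_cast this
      exact hsprop l hls
    · rw [← hcsum, Finsupp.linearCombination_apply, Finsupp.sum]
      refine Finset.sum_subset (Finset.subset_univ _) ?_
      intro l _ hl
      rw [Finsupp.notMem_support_iff.mp hl, zero_smul]
  choose c hc1 hc2 using key
  refine ⟨(fun j l => c j l : Matrix (Fin n) (Fin n) ℝ), ?_, ?_, ?_⟩
  · intro j
    by_contra h
    exact (hc1 j j h).2 rfl
  · intro j l h
    by_contra h'
    exact h (hc1 j l h').1.symm
  · ext j m
    show X j m = ∑ l, c j l * X l m
    have := congrFun (hc2 j) m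
    simpa [Finset.sum_apply] using this
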